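/- Let X = [[-1,-1],[0,-1]] and Y = [[0,-1],[0,0]] in M₂(ℝ). Define the arithmetic symmetric modulus |Z|_sym = (|Z| + |Z*|)/2. Then ‖|X+Y|_sym‖_∞ = 3/√2 > 7/(2√5) + 1/2 = ‖|X|_sym‖_∞ + ‖|Y|_sym‖_∞, where ‖·‖_∞ is the operator norm. Consequently there exist no unitaries U, V ∈ M₂(ℂ) with |X+Y|_sym ≤ U|X|_sym U* + V|Y|_sym V*. -/

import Mathlib

open Matrix ComplexOrder

/-- `|X| = (XᴴX)^{1/2}`. -/
noncomputable def absM {m n : ℕ} (X : Matrix (Fin m) (Fin n) ℂ) : Matrix (Fin n) (Fin n) ℂ :=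
  (Matrix.posSemidef_conjTranspose_mul_self X).1.eigenvectorUnitary.1 *
    diagonal ((↑) ∘ (Real.sqrt ·) ∘ (Matrix.posSemidef_conjTranspose_mul_self X).1.eigenvalues) *
    (star (Matrix.posSemidef_conjTranspose_mul_self X).1.eigenvectorUnitary : Matrix (Fin n) (Fin n) ℂ)

/-- The arithmetic symmetric modulus `|Z|_sym = (|Z| + |Zᴴ|)/2`. -/
noncomputable def symMod {n : ℕ} (Z : Matrix (Fin n) (Fin n) ℂ) : Matrix (Fin n) (Fin n) ℂ :=
  ((2:ℂ)⁻¹) • (absM Z + absM Zᴴ)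

/-- The ℓ²-operator norm of a 2×2 complex matrix. -/
noncomputable def opN (M : Matrix (Fin 2) (Fin 2) ℂ) : ℝ :=
  ‖Matrix.toEuclideanCLM (𝕜 := ℂ) (n := Fin 2) M‖

/- ### Auxiliary lemmas -/

lemma quad_aux' (p q r a1 a2 b1 b2 : ℝ) (hp : 0 ≤ p) (hr : 0 ≤ r) (hdet : q^2 ≤ p*r) :
    0 ≤ a1 * q * b1 * 2 + a1 ^ 2 * p + p * a2 ^ 2 + a2 * q * b2 * 2 + b1 ^ 2 * r + b2 ^ 2 * r := by
  have hna : 0 ≤ a1^2 + a2^2 := by positivity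
  have hnb : 0 ≤ b1^2 + b2^2 := by positivity
  have hCS : (a1*b1 + a2*b2)^2 ≤ (a1^2+a2^2) * (b1^2+b2^2) := by
    nlinarith [sq_nonneg (a1*b2 - a2*b1)]
  have h1 : (q*(a1*b1+a2*b2))^2 ≤ (p*(a1^2+a2^2))*(r*(b1^2+b2^2)) := by
    calc (q*(a1*b1+a2*b2))^2 = q^2 * (a1*b1+a2*b2)^2 := by ring
    _ ≤ (p*r) * ((a1^2+a2^2) * (b1^2+b2^2)) := by
        apply mul_le_mul hdet hCS (sq_nonneg _) (by nlinarith)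
    _ = (p*(a1^2+a2^2))*(r*(b1^2+b2^2)) := by ring
  nlinarith [sq_nonneg (p*(a1^2+a2^2) - r*(b1^2+b2^2)),
    mul_nonneg (mul_nonneg hp hna) (mul_nonneg hr hnb),
    mul_nonneg hp hna, mul_nonneg hr hnb]

lemma psd2 (p q r : ℝ) (hp : 0 ≤ p) (hr : 0 ≤ r) (hdet : q^2 ≤ p*r) :
    (!![(p:ℂ), q; q, r]).PosSemidef := by
  refine Matrix.PosSemidef.of_dotProduct_mulVec_nonneg ?_ ?_
  · ext i j
    fin_cases i <;> fin_cases j <;> simp [Matrix.conjTranspose_apply]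
  · intro x
    set a := x 0
    set b := x 1
    have hx : star x ⬝ᵥ (!![(p:ℂ), q; q, r] *ᵥ x)
        = (starRingEnd ℂ) a * (p*a + q*b) + (starRingEnd ℂ) b * (q*a + r*b) := by
      simp [dotProduct, Matrix.mulVec, Fin.sum_univ_two, a, b]
    rw [hx, Complex.le_def]
    refine ⟨?_, ?_⟩ <;>
      simp only [Complex.add_re, Complex.add_im, Complex.mul_re, Complex.mul_im,
        Complex.conj_re, Complex.conj_im, Complex.ofReal_re, Complex.ofReal_im,
        Complex.zero_re, Complex.zero_im]
    · ring_nf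
      exact quad_aux' p q r a.re a.im b.re b.im hp hr hdet
    · ring

section
open scoped MatrixOrder

lemma absM_eq {m : ℕ} (X : Matrix (Fin m) (Fin 2) ℂ) (p q r : ℝ)
    (hp : 0 ≤ p) (hr : 0 ≤ r) (hdet : q^2 ≤ p*r)
    (hsq : (!![(p:ℂ), q; q, r]) ^ 2 = Xᴴ * X) :
    absM X = !![(p:ℂ), q; q, r] := by
  have hX := Matrix.posSemidef_conjTranspose_mul_self X
  have h1 : absM X = cfc Real.sqrt (Xᴴ * X) := by
    rw [hX.1.cfc_eq, IsHermitian.cfc, Unitary.conjStarAlgAut_apply]; rfl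
  rw [h1, ← cfcₙ_eq_cfc, ← CFC.sqrt_eq_real_sqrt _ hX.nonneg]
  exact CFC.sqrt_unique (by rw [← sq]; exact hsq) (psd2 p q r hp hr hdet).nonneg

end

noncomputable def s5 : ℝ := (Real.sqrt 5)⁻¹
noncomputable def s2 : ℝ := (Real.sqrt 2)⁻¹

lemma s5nn : 0 ≤ s5 := by rw [s5]; positivity
lemma s2nn : 0 ≤ s2 := by rw [s2]; positivity

lemma s5sq : (s5:ℂ) * s5 = 1/5 := by
  have h : s5 * s5 = 1/5 := by
    rw [s5, ← Real.sqrt_inv, Real.mul_self_sqrt (by norm_num)]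
    norm_num
  calc (s5:ℂ) * s5 = ((s5*s5 : ℝ) : ℂ) := by push_cast; ring
  _ = 1/5 := by rw [h]; norm_num

lemma s2sq : (s2:ℂ) * s2 = 1/2 := by
  have h : s2 * s2 = 1/2 := by
    rw [s2, ← Real.sqrt_inv, Real.mul_self_sqrt (by norm_num)]
    norm_num
  calc (s2:ℂ) * s2 = ((s2*s2 : ℝ) : ℂ) := by push_cast; ring
  _ = 1/2 := by rw [h]; norm_num

lemma absX : absM !![(-1:ℂ), -1; 0, -1] = !![((2*s5:ℝ):ℂ), (s5:ℝ); (s5:ℝ), ((3*s5:ℝ):ℂ)] := by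
  have h := s5sq
  have hs := s5nn
  apply absM_eq <;> try nlinarith
  ext i j
  rw [pow_two]
  fin_cases i <;> fin_cases j <;>
    simp [Matrix.mul_apply, Fin.sum_univ_two, Matrix.conjTranspose_apply] <;>
    push_cast <;>
    first
      | linear_combination (5:ℂ) * h
      | linear_combination (10:ℂ) * h

lemma absXH : absM !![(-1:ℂ), 0; -1, -1] = !![((3*s5:ℝ):ℂ), (s5:ℝ); (s5:ℝ), ((2*s5:ℝ):ℂ)] := by
  have h := s5sq
  have hs := s5nn
  apply absM_eq <;> try nlinarith
  ext i j
  rw [pow_two]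
  fin_cases i <;> fin_cases j <;>
    simp [Matrix.mul_apply, Fin.sum_univ_two, Matrix.conjTranspose_apply] <;>
    push_cast <;>
    first
      | linear_combination (5:ℂ) * h
      | linear_combination (10:ℂ) * h

lemma absXY : absM !![(-1:ℂ), -2; 0, -1] = !![((s2:ℝ):ℂ), (s2:ℝ); (s2:ℝ), ((3*s2:ℝ):ℂ)] := by
  have h := s2sq
  have hs := s2nn
  apply absM_eq <;> try nlinarith
  ext i j
  rw [pow_two]
  fin_cases i <;> fin_cases j <;>
    simp [Matrix.mul_apply, Fin.sum_univ_two, Matrix.conjTranspose_apply, Complex.conj_ofNat] <;>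
    push_cast <;>
    first
      | linear_combination (2:ℂ) * h
      | linear_combination (4:ℂ) * h
      | linear_combination (10:ℂ) * h

lemma absXYH : absM !![(-1:ℂ), 0; -2, -1] = !![((3*s2:ℝ):ℂ), (s2:ℝ); (s2:ℝ), ((s2:ℝ):ℂ)] := by
  have h := s2sq
  have hs := s2nn
  apply absM_eq <;> try nlinarith
  ext i j
  rw [pow_two]
  fin_cases i <;> fin_cases j <;>
    simp [Matrix.mul_apply, Fin.sum_univ_two, Matrix.conjTranspose_apply, Complex.conj_ofNat] <;>
    push_cast <;>
    first
      | linear_combination (2:ℂ) * h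
      | linear_combination (4:ℂ) * h
      | linear_combination (10:ℂ) * h

lemma absY : absM !![(0:ℂ), -1; 0, 0] = !![((0:ℝ):ℂ), (0:ℝ); (0:ℝ), ((1:ℝ):ℂ)] := by
  apply absM_eq <;> try norm_num
  ext i j
  rw [pow_two]
  fin_cases i <;> fin_cases j <;>
    simp [Matrix.mul_apply, Fin.sum_univ_two, Matrix.conjTranspose_apply]

lemma absYH : absM !![(0:ℂ), 0; -1, 0] = !![((1:ℝ):ℂ), (0:ℝ); (0:ℝ), ((0:ℝ):ℂ)] := by
  apply absM_eq <;> try norm_num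
  ext i j
  rw [pow_two]
  fin_cases i <;> fin_cases j <;>
    simp [Matrix.mul_apply, Fin.sum_univ_two, Matrix.conjTranspose_apply]

lemma symX : symMod !![(-1:ℂ), -1; 0, -1]
    = !![((5/2*s5:ℝ):ℂ), (s5:ℝ); (s5:ℝ), ((5/2*s5:ℝ):ℂ)] := by
  rw [symMod]
  have hT : (!![(-1:ℂ), -1; 0, -1])ᴴ = !![(-1:ℂ), 0; -1, -1] := by
    ext i j; fin_cases i <;> fin_cases j <;> simp [Matrix.conjTranspose_apply]
  rw [hT, absX, absXH]
  ext i j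
  fin_cases i <;> fin_cases j <;> simp <;> push_cast <;> ring

lemma symY : symMod !![(0:ℂ), -1; 0, 0]
    = !![((1/2:ℝ):ℂ), (0:ℝ); (0:ℝ), ((1/2:ℝ):ℂ)] := by
  rw [symMod]
  have hT : (!![(0:ℂ), -1; 0, 0])ᴴ = !![(0:ℂ), 0; -1, 0] := by
    ext i j; fin_cases i <;> fin_cases j <;> simp [Matrix.conjTranspose_apply]
  rw [hT, absY, absYH]
  ext i j
  fin_cases i <;> fin_cases j <;> simp <;> push_cast <;> ring

lemma symXY : symMod !![(-1:ℂ), -2; 0, -1]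
    = !![((2*s2:ℝ):ℂ), (s2:ℝ); (s2:ℝ), ((2*s2:ℝ):ℂ)] := by
  rw [symMod]
  have hT : (!![(-1:ℂ), -2; 0, -1])ᴴ = !![(-1:ℂ), 0; -2, -1] := by
    ext i j; fin_cases i <;> fin_cases j <;> simp [Matrix.conjTranspose_apply]
  rw [hT, absXY, absXYH]
  ext i j
  fin_cases i <;> fin_cases j <;> simp <;> push_cast <;> ring

lemma norm_aux (p q a1 a2 b1 b2 : ℝ) (hp : 0 ≤ p) (hq : 0 ≤ q) :
    (p*a1 + q*b1)^2 + (p*a2 + q*b2)^2 + ((q*a1 + p*b1)^2 + (q*a2 + p*b2)^2)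
      ≤ (p+q)^2 * ((a1^2+a2^2) + (b1^2+b2^2)) := by
  nlinarith [mul_nonneg (mul_nonneg hp hq) (sq_nonneg (a1-b1)),
    mul_nonneg (mul_nonneg hp hq) (sq_nonneg (a2-b2))]

lemma cabs_sq (z : ℂ) : ‖z‖ ^ 2 = z.re^2 + z.im^2 := by
  rw [Complex.sq_norm, Complex.normSq_apply]; ring

lemma opN_eq (p q : ℝ) (hp : 0 ≤ p) (hq : 0 ≤ q) :
    opN !![(p:ℂ), q; q, p] = p + q := by
  set T := Matrix.toEuclideanCLM (𝕜 := ℂ) (n := Fin 2) !![(p:ℂ), q; q, p] with hT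
  have happ : ∀ x : EuclideanSpace ℂ (Fin 2),
      T x = (WithLp.equiv 2 (Fin 2 → ℂ)).symm
        ((!![(p:ℂ), q; q, p]) *ᵥ (WithLp.equiv 2 (Fin 2 → ℂ) x)) := fun _ => rfl
  refine le_antisymm ?_ ?_
  · apply ContinuousLinearMap.opNorm_le_bound _ (by positivity)
    intro x
    rw [happ]
    rw [EuclideanSpace.norm_eq, EuclideanSpace.norm_eq]
    rw [show (p+q : ℝ) = Real.sqrt ((p+q)^2) by rw [Real.sqrt_sq (by positivity)]]
    rw [← Real.sqrt_mul (by positivity)]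
    apply Real.sqrt_le_sqrt
    simp only [WithLp.equiv_symm_apply, WithLp.equiv_apply, PiLp.toLp_apply]
    simp [Matrix.mulVec, dotProduct, Fin.sum_univ_two, cabs_sq, Complex.add_re,
      Complex.add_im, Complex.mul_re, Complex.mul_im]
    have := norm_aux p q (x 0).re (x 0).im (x 1).re (x 1).im hp hq
    nlinarith [this]
  · have h := T.le_opNorm ((WithLp.equiv 2 (Fin 2 → ℂ)).symm ![1,1])
    rw [happ] at h
    simp only [Equiv.apply_symm_apply] at h
    rw [EuclideanSpace.norm_eq, EuclideanSpace.norm_eq] at h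
    simp only [WithLp.equiv_symm_apply, PiLp.toLp_apply] at h
    simp [Matrix.mulVec, dotProduct, Fin.sum_univ_two, cabs_sq, Complex.add_re,
      Complex.add_im, Complex.ofReal_re, Complex.ofReal_im] at h
    have h2 : Real.sqrt ((p+q)^2 + (p+q)^2) = (p+q) * Real.sqrt 2 := by
      rw [show (p+q)^2 + (p+q)^2 = (p+q)^2 * 2 by ring, Real.sqrt_mul (by positivity),
        Real.sqrt_sq (by positivity)]
    have hs2 : 0 < Real.sqrt 2 := by positivity
    have h3 : (p + q) * Real.sqrt 2 ≤ ‖T‖ * Real.sqrt 2 := by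
      calc (p + q) * Real.sqrt 2 = Real.sqrt ((p+q)^2 + (p+q)^2) := h2.symm
      _ ≤ ‖T‖ * Real.sqrt 2 := by convert h using 2 <;> ring_nf
    exact le_of_mul_le_mul_right h3 hs2

lemma key_ineq : 7 / (2 * Real.sqrt 5) + 1 / 2 < 3 / Real.sqrt 2 := by
  have h5 : (2.236:ℝ) < Real.sqrt 5 := by
    rw [show (2.236:ℝ) = Real.sqrt (2.236^2) by rw [Real.sqrt_sq (by norm_num)]]
    apply Real.sqrt_lt_sqrt (by positivity)
    norm_num
  have h2 : Real.sqrt 2 < 1.41422 := by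
    rw [show (1.41422:ℝ) = Real.sqrt (1.41422^2) by rw [Real.sqrt_sq (by norm_num)]]
    apply Real.sqrt_lt_sqrt (by positivity)
    norm_num
  have hs2 : (0:ℝ) < Real.sqrt 2 := by positivity
  have a1 : 7 / (2 * Real.sqrt 5) < 7 / (2 * 2.236) := by gcongr <;> norm_num
  have a2 : (3:ℝ) / 1.41422 < 3 / Real.sqrt 2 := by gcongr <;> norm_num
  have : (7:ℝ) / (2 * 2.236) + 1/2 < 3 / 1.41422 := by norm_num
  linarith

/-- transfer through a unitary -/
lemma unit_transfer (U M : Matrix (Fin 2) (Fin 2) ℂ) (x : Fin 2 → ℂ) :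
    star x ⬝ᵥ ((U * M * Uᴴ) *ᵥ x) = star (Uᴴ *ᵥ x) ⬝ᵥ (M *ᵥ (Uᴴ *ᵥ x)) := by
  rw [star_mulVec, conjTranspose_conjTranspose, ← Matrix.dotProduct_mulVec,
    mulVec_mulVec, mulVec_mulVec]

lemma quad_bound (p q : ℝ) (hp : 0 ≤ p) (hq : 0 ≤ q) (y : Fin 2 → ℂ) :
    star y ⬝ᵥ (!![(p:ℂ), q; q, p] *ᵥ y) ≤ ((p+q:ℝ):ℂ) * (star y ⬝ᵥ y) := by
  have hD := psd2 q (-q) q hq hq (by nlinarith)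
  have h0 := hD.dotProduct_mulVec_nonneg y
  rw [← sub_nonneg]
  have heq : ((p+q:ℝ):ℂ) * (star y ⬝ᵥ y) - star y ⬝ᵥ (!![(p:ℂ), q; q, p] *ᵥ y)
      = star y ⬝ᵥ (!![((q:ℝ):ℂ), ((-q:ℝ):ℂ); ((-q:ℝ):ℂ), ((q:ℝ):ℂ)] *ᵥ y) := by
    simp [dotProduct, Matrix.mulVec, Fin.sum_univ_two]
    push_cast
    ring
  rw [heq]
  exact h0

/-- Thompson's inequality fails for the arithmetic symmetric modulus: with
`X = [[-1,-1],[0,-1]]`, `Y = [[0,-1],[0,0]]`, the operator norms obstruct it. -/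
theorem sym_modulus_thompson_fails :
    let X : Matrix (Fin 2) (Fin 2) ℂ := !![-1, -1; 0, -1]
    let Y : Matrix (Fin 2) (Fin 2) ℂ := !![0, -1; 0, 0]
    opN (symMod (X + Y)) = 3 / Real.sqrt 2 ∧
    opN (symMod X) = 7 / (2 * Real.sqrt 5) ∧
    opN (symMod Y) = 1 / 2 ∧
    3 / Real.sqrt 2 > 7 / (2 * Real.sqrt 5) + 1 / 2 ∧
    ¬ ∃ U V : Matrix (Fin 2) (Fin 2) ℂ,
        Uᴴ * U = 1 ∧ U * Uᴴ = 1 ∧ Vᴴ * V = 1 ∧ V * Vᴴ = 1 ∧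
        (U * symMod X * Uᴴ + V * symMod Y * Vᴴ - symMod (X + Y)).PosSemidef := by
  intro X Y
  have hXY : X + Y = !![(-1:ℂ), -2; 0, -1] := by
    ext i j; fin_cases i <;> fin_cases j <;> simp [X, Y] <;> norm_num
  have hX : X = !![(-1:ℂ), -1; 0, -1] := rfl
  have hY : Y = !![(0:ℂ), -1; 0, 0] := rfl
  have hs5 := s5nn
  have hs2 := s2nn
  have hsqrt5 : Real.sqrt 5 ≠ 0 := by positivity
  have hsqrt2 : Real.sqrt 2 ≠ 0 := by positivity
  have e1 : opN (symMod (X + Y)) = 3 / Real.sqrt 2 := by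
    rw [hXY, symXY, opN_eq _ _ (by linarith) hs2, s2]
    field_simp
    ring
  have e2 : opN (symMod X) = 7 / (2 * Real.sqrt 5) := by
    rw [hX, symX, opN_eq _ _ (by linarith) hs5, s5]
    field_simp
    ring
  have e3 : opN (symMod Y) = 1 / 2 := by
    rw [hY, symY, opN_eq _ _ (by norm_num) le_rfl]
    norm_num
  refine ⟨e1, e2, e3, key_ineq, ?_⟩
  rintro ⟨U, V, hU1, hU2, hV1, hV2, hPSD⟩
  set x : Fin 2 → ℂ := ![1, 1] with hx
  have h0 := hPSD.dotProduct_mulVec_nonneg x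
  -- expand the quadratic form
  have hsum : star x ⬝ᵥ ((U * symMod X * Uᴴ + V * symMod Y * Vᴴ - symMod (X+Y)) *ᵥ x)
      = star x ⬝ᵥ ((U * symMod X * Uᴴ) *ᵥ x) + star x ⬝ᵥ ((V * symMod Y * Vᴴ) *ᵥ x)
        - star x ⬝ᵥ (symMod (X+Y) *ᵥ x) := by
    rw [Matrix.sub_mulVec, Matrix.add_mulVec, dotProduct_sub, dotProduct_add]
  -- value of the A-form
  have hA : star x ⬝ᵥ (symMod (X+Y) *ᵥ x) = ((6*s2:ℝ):ℂ) := by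
    rw [hXY, symXY]
    simp [dotProduct, Matrix.mulVec, Fin.sum_univ_two, hx]
    push_cast
    ring
  -- norms of transformed vectors
  have hnormU : star (Uᴴ *ᵥ x) ⬝ᵥ (Uᴴ *ᵥ x) = 2 := by
    rw [star_mulVec, conjTranspose_conjTranspose, ← Matrix.dotProduct_mulVec,
      mulVec_mulVec, hU2]
    simp [dotProduct, Fin.sum_univ_two, hx]
    norm_num
  have hnormV : star (Vᴴ *ᵥ x) ⬝ᵥ (Vᴴ *ᵥ x) = 2 := by
    rw [star_mulVec, conjTranspose_conjTranspose, ← Matrix.dotProduct_mulVec,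
      mulVec_mulVec, hV2]
    simp [dotProduct, Fin.sum_univ_two, hx]
    norm_num
  have hbU : star x ⬝ᵥ ((U * symMod X * Uᴴ) *ᵥ x) ≤ ((7*s5:ℝ):ℂ) := by
    rw [hX, symX, unit_transfer]
    calc star (Uᴴ *ᵥ x) ⬝ᵥ (!![((5/2*s5:ℝ):ℂ), (s5:ℝ); (s5:ℝ), ((5/2*s5:ℝ):ℂ)] *ᵥ (Uᴴ *ᵥ x))
        ≤ ((5/2*s5 + s5:ℝ):ℂ) * (star (Uᴴ *ᵥ x) ⬝ᵥ (Uᴴ *ᵥ x)) :=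
          quad_bound _ _ (by linarith) hs5 _
      _ = ((7*s5:ℝ):ℂ) := by rw [hnormU]; push_cast; ring
  have hbV : star x ⬝ᵥ ((V * symMod Y * Vᴴ) *ᵥ x) ≤ ((1:ℝ):ℂ) := by
    rw [hY, symY, unit_transfer]
    calc star (Vᴴ *ᵥ x) ⬝ᵥ (!![((1/2:ℝ):ℂ), (0:ℝ); (0:ℝ), ((1/2:ℝ):ℂ)] *ᵥ (Vᴴ *ᵥ x))
        ≤ ((1/2 + 0:ℝ):ℂ) * (star (Vᴴ *ᵥ x) ⬝ᵥ (Vᴴ *ᵥ x)) :=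
          quad_bound _ _ (by norm_num) le_rfl _
      _ = ((1:ℝ):ℂ) := by rw [hnormV]; push_cast; ring
  -- combine
  rw [hsum, hA] at h0
  have hle : ((6*s2:ℝ):ℂ) ≤ ((7*s5:ℝ):ℂ) + ((1:ℝ):ℂ) :=
    le_trans (sub_nonneg.mp h0) (add_le_add hbU hbV)
  rw [← Complex.ofReal_add] at hle
  rw [Complex.real_le_real] at hle
  -- real contradiction
  have hk := key_ineq
  have h6 : 6 * s2 = 2 * (3 / Real.sqrt 2) := by rw [s2]; field_simp; ring
  have h7 : 7 * s5 + 1 = 2 * (7 / (2 * Real.sqrt 5) + 1/2) := by rw [s5]; field_simp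
  rw [h6, h7] at hle
  linarith
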